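/- For the Paley graph on 9 vertices G_1 (strongly regular with parameters (9,4,1,2)) and its complement G_2, the gauge-dual program γ°(G_1,G_2), written as the linear program min{x_0 : Px ≥ 0, x_0 − x_1 ≥ 1, x_0 + x_2 ≥ 1} with P = [[1,4,4],[1,1,−2],[1,−2,1]], has optimal value strictly greater than (|E_1| + |E_2|)/γ(G_1,G_2) = 8/11; equivalently, the dual LP max{b+c : y ≥ 0, a,b,c ≥ 0, P^T y = b·e_1 − c·e_2 + (1−a−b−c)·e_0} admits the feasible solution y = (1/2, 1/2, 1/4) (with a = 0, b = 1/2, c = 1/4) of value 3/4 > 8/11. -/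
import Mathlib

open Matrix

/-- For the Paley graph on 9 vertices `G₁` (strongly regular with parameters (9,4,1,2))
and its complement `G₂`, the gauge-dual program `γ°(G₁, G₂)`, written as the linear
program `min {x 0 : P x ≥ 0, x 0 - x 1 ≥ 1, x 0 + x 2 ≥ 1}` with
`P = [[1,4,4],[1,1,-2],[1,-2,1]]`, has optimal value strictly greater than
`(|E₁| + |E₂|)/γ(G₁, G₂) = 8/11`: every feasible `x` has `x 0 > 8/11`. Equivalently, the
dual LP `max {b + c : y ≥ 0, a, b, c ≥ 0, Pᵀ y = b • e₁ - c • e₂ + (1 - a - b - c) • e₀}`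
admits a feasible solution of value `b + c = 3/4 > 8/11`. -/
theorem paley9_gamma_dual_gt :
    (∀ x : Fin 3 → ℝ,
        (∀ l, 0 ≤ (!![1, 4, 4; 1, 1, -2; 1, -2, 1] : Matrix (Fin 3) (Fin 3) ℝ).mulVec x l) →
        x 0 - x 1 ≥ 1 → x 0 + x 2 ≥ 1 → (8 : ℝ) / 11 < x 0) ∧
    (∃ (y : Fin 3 → ℝ) (a b c : ℝ), (∀ l, 0 ≤ y l) ∧ 0 ≤ a ∧ 0 ≤ b ∧ 0 ≤ c ∧
        (!![1, 4, 4; 1, 1, -2; 1, -2, 1] : Matrix (Fin 3) (Fin 3) ℝ)ᵀ.mulVec y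
          = b • (fun i => if i = 1 then (1 : ℝ) else 0)
            - c • (fun i => if i = 2 then (1 : ℝ) else 0)
            + (1 - a - b - c) • (fun i => if i = 0 then (1 : ℝ) else 0) ∧
        b + c = 3 / 4) := by
  constructor
  · intro x hP h1 h2
    have h := hP 1
    simp [Matrix.mulVec, dotProduct, Fin.sum_univ_three] at h
    linarith
  · refine ⟨![0, 1/4, 0], 0, 1/4, 1/2, ?_, le_refl 0, by norm_num, by norm_num, ?_, by norm_num⟩
    · intro l; fin_cases l <;> norm_num
    · funext i
      fin_cases i <;>
        simp [Matrix.mulVec, dotProduct, Fin.sum_univ_three, Matrix.transpose,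
          Pi.add_apply, Pi.sub_apply, Pi.smul_apply] <;> norm_num
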